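/- Let N ≥ 2 and let D be an integer with 1 ≤ D < N. Equip {0,1}^N with the Hamming distance δ, and let H_D = {x ∈ {0,1}^N : δ(0,x) = D}. For every α, β ∈ (0,1) with D ≤ αβN, there exists a subset Θ ⊆ H_D such that δ(θ, θ') > 2(1−α)D for all distinct θ, θ' ∈ Θ, and ln|Θ| ≥ ρ D ln(N/D), where ρ = α(−ln β + β − 1)/(−ln(αβ)). -/

import Mathlib

open Finset



private def tv {N : ℕ} (B : Finset (Fin N)) : Fin N → Bool := fun i => decide (i ∈ B)

private lemma tv_inj {N : ℕ} : Function.Injective (tv (N := N)) := by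
  intro A B h
  ext i
  have := congrFun h i
  simpa [tv] using this

private lemma hamming_tv_zero {N : ℕ} (B : Finset (Fin N)) :
    hammingDist (fun _ => false) (tv B) = B.card := by
  unfold hammingDist tv
  congr 1
  ext i
  simp

private lemma hamming_tv {N : ℕ} (A B : Finset (Fin N)) :
    hammingDist (tv A) (tv B) + (A ∩ B).card + (A ∩ B).card = A.card + B.card := by
  have h1 : hammingDist (tv A) (tv B) = ((A \ B) ∪ (B \ A)).card := by
    unfold hammingDist tv
    congr 1
    ext i
    simp only [mem_filter, mem_univ, true_and, mem_union, mem_sdiff]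
    by_cases hA : i ∈ A <;> by_cases hB : i ∈ B <;> simp [hA, hB]
  have h2 : Disjoint (A \ B) (B \ A) := by
    simp [disjoint_left]
    tauto
  rw [h1, card_union_of_disjoint h2]
  have : (A \ B).card + (A ∩ B).card = A.card := by
    rw [card_sdiff_add_card_inter]
  have h4 : (B \ A).card + (B ∩ A).card = B.card := by
    rw [card_sdiff_add_card_inter]
  rw [inter_comm A B] at this ⊢
  omega



private lemma gvCardFilterMem {N m : ℕ} (hm : 1 ≤ m) (x : Fin N) :
    ((powersetCard m (univ : Finset (Fin N))).filter (fun B => x ∈ B)).card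
      = (N - 1).choose (m - 1) := by
  have h : ((powersetCard m (univ : Finset (Fin N))).filter (fun B => x ∈ B)).card
      = (powersetCard (m - 1) ((univ : Finset (Fin N)).erase x)).card := by
    apply Finset.card_bij (fun B _ => B.erase x)
    · intro B hB
      simp only [mem_filter, mem_powersetCard] at hB
      simp only [mem_powersetCard]
      constructor
      · intro y hy
        simp only [mem_erase] at hy ⊢
        exact ⟨hy.1, mem_univ y⟩
      · rw [card_erase_of_mem hB.2, hB.1.2]
    · intro B hB B' hB' h
      simp only [mem_filter, mem_powersetCard] at hB hB'
      have : insert x (B.erase x) = insert x (B'.erase x) := by rw [h]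
      rwa [insert_erase hB.2, insert_erase hB'.2] at this
    · intro B' hB'
      simp only [mem_powersetCard] at hB'
      refine ⟨insert x B', ?_, ?_⟩
      · have hx : x ∉ B' := fun hx => (mem_erase.mp (hB'.1 hx)).1 rfl
        simp only [mem_filter, mem_powersetCard]
        refine ⟨⟨subset_univ _, ?_⟩, mem_insert_self _ _⟩
        rw [card_insert_of_notMem hx, hB'.2]
        omega
      · have hx : x ∉ B' := fun hx => (mem_erase.mp (hB'.1 hx)).1 rfl
        rw [erase_insert hx]
  rw [h, card_powersetCard, card_erase_of_mem (mem_univ x), card_univ, Fintype.card_fin]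

private lemma gvSumInter {N m : ℕ} (S : Finset (Fin N)) (hm : 1 ≤ m) :
    ∑ B ∈ powersetCard m (univ : Finset (Fin N)), (B ∩ S).card
      = S.card * (N - 1).choose (m - 1) := by
  have h : ∀ B ∈ powersetCard m (univ : Finset (Fin N)),
      (B ∩ S).card = ∑ x ∈ S, if x ∈ B then 1 else 0 := by
    intro B _
    rw [Finset.sum_boole]
    simp [inter_comm, Finset.filter_mem_eq_inter]
  rw [sum_congr rfl h, sum_comm]
  have h2 : ∀ x ∈ S, (∑ B ∈ powersetCard m (univ : Finset (Fin N)), if x ∈ B then 1 else 0)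
      = (N-1).choose (m-1) := by
    intro x _
    rw [Finset.sum_boole]
    simp only [Nat.cast_id]
    exact gvCardFilterMem hm x
  rw [sum_congr rfl h2, sum_const, smul_eq_mul]



private lemma gvInnerSum {N : ℕ} (S B : Finset (Fin N)) (t : ℝ) :
    ∑ x ∈ univ \ B, t ^ ((insert x B ∩ S).card)
      = ((S \ B).card : ℝ) * t ^ ((B ∩ S).card + 1)
        + (((univ \ B) \ S).card : ℝ) * t ^ (B ∩ S).card := by
  rw [← Finset.sum_filter_add_sum_filter_not (univ \ B) (fun x => x ∈ S)]
  have h1 : (univ \ B).filter (fun x => x ∈ S) = S \ B := by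
    ext x; simp [mem_filter, mem_sdiff, and_comm]
  have h2 : (univ \ B).filter (fun x => x ∉ S) = (univ \ B) \ S := by
    ext x; simp [mem_filter, mem_sdiff]
  rw [h1, h2]
  congr 1
  · rw [Finset.sum_congr rfl (fun x hx => ?_), sum_const, nsmul_eq_mul]
    have hxS : x ∈ S := (mem_sdiff.mp hx).1
    have hxB : x ∉ B := (mem_sdiff.mp hx).2
    have : insert x B ∩ S = insert x (B ∩ S) := by
      rw [insert_inter_of_mem hxS]
    rw [this, card_insert_of_notMem (fun hc => hxB (mem_inter.mp hc).1)]
  · rw [Finset.sum_congr rfl (fun x hx => ?_), sum_const, nsmul_eq_mul]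
    have hxS : x ∉ S := (mem_sdiff.mp hx).2
    have : insert x B ∩ S = B ∩ S := insert_inter_of_notMem hxS
    rw [this]

private lemma gvKeyIdentity {N : ℕ} (S : Finset (Fin N)) (n : ℕ) (t : ℝ) :
    ((n + 1 : ℕ) : ℝ) * ∑ B ∈ powersetCard (n+1) (univ : Finset (Fin N)), t ^ (B ∩ S).card
      = ∑ B ∈ powersetCard n (univ : Finset (Fin N)),
          (((S \ B).card : ℝ) * t ^ ((B ∩ S).card + 1)
            + (((univ \ B) \ S).card : ℝ) * t ^ (B ∩ S).card) := by
  have lhs : ((n + 1 : ℕ) : ℝ) * ∑ B ∈ powersetCard (n+1) (univ : Finset (Fin N)), t ^ (B ∩ S).card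
      = ∑ B ∈ powersetCard (n+1) (univ : Finset (Fin N)), ∑ x ∈ B, t ^ (B ∩ S).card := by
    rw [mul_sum]
    refine sum_congr rfl fun B hB => ?_
    rw [sum_const, nsmul_eq_mul, (mem_powersetCard.mp hB).2]
  have rhs : ∀ B ∈ powersetCard n (univ : Finset (Fin N)),
      (((S \ B).card : ℝ) * t ^ ((B ∩ S).card + 1)
            + (((univ \ B) \ S).card : ℝ) * t ^ (B ∩ S).card)
      = ∑ x ∈ univ \ B, t ^ ((insert x B ∩ S).card) := fun B _ => (gvInnerSum S B t).symm
  rw [lhs, sum_congr rfl rhs]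
  rw [Finset.sum_sigma', Finset.sum_sigma']
  refine Finset.sum_nbij' (fun p => ⟨p.1.erase p.2, p.2⟩) (fun p => ⟨insert p.2 p.1, p.2⟩)
    ?_ ?_ ?_ ?_ ?_
  · rintro ⟨B, x⟩ hp
    simp only [mem_sigma, mem_powersetCard] at hp ⊢
    obtain ⟨⟨hBu, hBc⟩, hx⟩ := hp
    refine ⟨⟨subset_univ _, ?_⟩, ?_⟩
    · rw [card_erase_of_mem hx, hBc]
      omega
    · simp [mem_sdiff]
  · rintro ⟨B, x⟩ hp
    simp only [mem_sigma, mem_powersetCard, mem_sdiff, mem_univ, true_and] at hp ⊢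
    obtain ⟨⟨hBu, hBc⟩, hx⟩ := hp
    refine ⟨⟨subset_univ _, ?_⟩, mem_insert_self _ _⟩
    rw [card_insert_of_notMem hx, hBc]
  · rintro ⟨B, x⟩ hp
    simp only [mem_sigma, mem_powersetCard] at hp
    simp [insert_erase hp.2]
  · rintro ⟨B, x⟩ hp
    simp only [mem_sigma, mem_powersetCard, mem_sdiff, mem_univ, true_and] at hp
    simp [erase_insert hp.2]
  · rintro ⟨B, x⟩ hp
    simp only [mem_sigma, mem_powersetCard] at hp
    simp [insert_erase hp.2]

private lemma gvSumInterN {N m : ℕ} (S : Finset (Fin N)) (hmN : m ≤ N) :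
    (N : ℝ) * ∑ B ∈ powersetCard m (univ : Finset (Fin N)), ((B ∩ S).card : ℝ)
      = (S.card : ℝ) * m * N.choose m := by
  rcases Nat.eq_zero_or_pos m with rfl | hm
  · simp
  · have h1 := gvSumInter S hm
    have h2 : N * ((N - 1).choose (m - 1)) = m * N.choose m := by
      have hN : 1 ≤ N := le_trans hm hmN
      obtain ⟨N', rfl⟩ : ∃ N', N = N' + 1 := ⟨N - 1, by omega⟩
      obtain ⟨m', rfl⟩ : ∃ m', m = m' + 1 := ⟨m - 1, by omega⟩
      simpa [Nat.succ_sub_one, mul_comm] using Nat.add_one_mul_choose_eq N' m'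
    have hcast : ∑ B ∈ powersetCard m (univ : Finset (Fin N)), ((B ∩ S).card : ℝ)
        = ((S.card * (N - 1).choose (m - 1) : ℕ) : ℝ) := by
      rw [← h1]; push_cast; rfl
    rw [hcast]
    push_cast
    have h2' : (N : ℝ) * ((N - 1).choose (m - 1) : ℝ) = m * N.choose m := by
      exact_mod_cast congrArg (Nat.cast : ℕ → ℝ) h2
    nlinarith [h2']

private lemma gvMGF {N : ℕ} (S : Finset (Fin N)) (t : ℝ) (ht : 1 ≤ t) :
    ∀ n, n ≤ N → ∑ B ∈ powersetCard n (univ : Finset (Fin N)), t ^ (B ∩ S).card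
      ≤ (N.choose n : ℝ) * (1 + (t - 1) * S.card / N) ^ n := by
  intro n
  induction n with
  | zero => intro _; simp
  | succ n ih =>
    intro hn1
    have hnN : n ≤ N := Nat.le_of_succ_le hn1
    have hNpos : 0 < N := Nat.lt_of_lt_of_le (Nat.zero_lt_succ n) hn1
    have hN0 : (N : ℝ) ≠ 0 := Nat.cast_ne_zero.mpr hNpos.ne'
    have ht0 : (0:ℝ) ≤ t - 1 := by linarith
    set K : ℕ := S.card with hK
    set c : ℝ := 1 + (t - 1) * K / N with hc
    have hc1 : 1 ≤ c := by
      rw [hc]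
      have h0 : 0 ≤ (t - 1) * (K:ℝ) / N :=
        div_nonneg (mul_nonneg ht0 (Nat.cast_nonneg K)) (Nat.cast_nonneg N)
      linarith
    set s := powersetCard n (univ : Finset (Fin N)) with hs
    set f : Finset (Fin N) → ℝ := fun B => t ^ (B ∩ S).card with hf
    set g : Finset (Fin N) → ℝ := fun B => ((S \ B).card : ℝ) * t + (((univ \ B) \ S).card : ℝ)
      with hg
    have cardfacts : ∀ B ∈ s, ((S \ B).card : ℝ) = (K : ℝ) - ((B ∩ S).card : ℝ) ∧
        (((univ \ B) \ S).card : ℝ) = (N : ℝ) - (n : ℝ) - ((K : ℝ) - ((B ∩ S).card : ℝ)) := by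
      intro B hB
      have hBn : B.card = n := (mem_powersetCard.mp hB).2
      have f1 : (S \ B).card + (S ∩ B).card = K := card_sdiff_add_card_inter S B
      have f2 : ((univ \ B) \ S).card + ((univ \ B) ∩ S).card = (univ \ B).card :=
        card_sdiff_add_card_inter _ _
      have f3 : (univ \ B) ∩ S = S \ B := by
        ext x; simp only [mem_inter, mem_sdiff, mem_univ, true_and]; tauto
      have f4 : (univ \ B).card = N - n := by
        rw [card_sdiff_of_subset (subset_univ B), card_univ, Fintype.card_fin, hBn]
      have f5 : (S ∩ B).card = (B ∩ S).card := by rw [inter_comm]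
      rw [f3, f4] at f2
      rw [f5] at f1
      have e1 : ((S \ B).card : ℝ) = (K : ℝ) - ((B ∩ S).card : ℝ) := by
        have : (K : ℝ) = ((S \ B).card : ℝ) + ((B ∩ S).card : ℝ) := by exact_mod_cast f1.symm
        linarith
      refine ⟨e1, ?_⟩
      have : ((N - n : ℕ) : ℝ) = (N : ℝ) - (n : ℝ) := by
        rw [Nat.cast_sub hnN]
      have f2' : (((univ \ B) \ S).card : ℝ) + ((S \ B).card : ℝ) = (N : ℝ) - (n : ℝ) := by
        rw [← this]; exact_mod_cast f2
      linarith [e1, f2']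
    -- the identity
    have keyid := gvKeyIdentity S n t
    have keyid' : ((n + 1 : ℕ) : ℝ) * ∑ B ∈ powersetCard (n+1) (univ : Finset (Fin N)), f B
        = ∑ B ∈ s, f B * g B := by
      rw [keyid]
      exact sum_congr rfl fun B _ => by simp only [hf, hg]; ring
    -- antivary
    have hanti : AntivaryOn f g s := by
      intro i hi j hj hgij
      obtain ⟨e1i, e2i⟩ := cardfacts i hi
      obtain ⟨e1j, e2j⟩ := cardfacts j hj
      have hgi : g i = (K : ℝ) * t + (N : ℝ) - n - K + ((i ∩ S).card : ℝ) * (1 - t) := by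
        simp only [hg]; rw [e1i, e2i]; ring
      have hgj : g j = (K : ℝ) * t + (N : ℝ) - n - K + ((j ∩ S).card : ℝ) * (1 - t) := by
        simp only [hg]; rw [e1j, e2j]; ring
      have hlt : ((j ∩ S).card : ℝ) * (t - 1) < ((i ∩ S).card : ℝ) * (t - 1) := by
        rw [hgi, hgj] at hgij; nlinarith
      have htpos : 0 < t - 1 := by
        rcases ht0.eq_or_lt with h | h
        · exfalso; rw [← h] at hlt; simp at hlt
        · exact h
      have hji : (j ∩ S).card ≤ (i ∩ S).card := by
        have := (mul_lt_mul_iff_left₀ htpos).mp hlt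
        exact_mod_cast this.le
      exact pow_le_pow_right₀ ht hji
    have cheb := hanti.card_mul_sum_le_sum_mul_sum
    -- sum of g
    have hcards : ((s.card : ℕ) : ℝ) = (N.choose n : ℝ) := by
      rw [hs, card_powersetCard, card_univ, Fintype.card_fin]
    have hSj := gvSumInterN S hnN
    have hSg : ∑ B ∈ s, g B = (N.choose n : ℝ) * ((N : ℝ) - n) * c := by
      have e : ∑ B ∈ s, g B
          = ∑ B ∈ s, (((K : ℝ) * t + (N : ℝ) - n - K) + (1 - t) * ((B ∩ S).card : ℝ)) := by
        refine sum_congr rfl fun B hB => ?_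
        obtain ⟨e1, e2⟩ := cardfacts B hB
        simp only [hg]; rw [e1, e2]; ring
      rw [e, sum_add_distrib, sum_const, ← mul_sum, nsmul_eq_mul, hcards]
      rw [hc]
      field_simp
      linear_combination (1 - t) * hSj
    have hSg0 : 0 ≤ ∑ B ∈ s, g B := by
      rw [hSg]
      have h1 : (0:ℝ) ≤ (N.choose n : ℝ) := Nat.cast_nonneg _
      have h2 : (0:ℝ) ≤ (N : ℝ) - n := by
        have : (n : ℝ) ≤ N := Nat.cast_le.mpr hnN
        linarith
      have hc0 : (0:ℝ) ≤ c := by linarith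
      exact mul_nonneg (mul_nonneg h1 h2) hc0
    have ihn := ih hnN
    have hCpos : (0:ℝ) < (N.choose n : ℝ) := Nat.cast_pos.mpr (Nat.choose_pos hnN)
    -- combine
    have step : (N.choose n : ℝ) * (((n + 1 : ℕ) : ℝ)
          * ∑ B ∈ powersetCard (n+1) (univ : Finset (Fin N)), f B)
        ≤ (N.choose n : ℝ) * (c ^ n * ((N.choose n : ℝ) * ((N : ℝ) - n) * c)) := by
      rw [keyid']
      calc (N.choose n : ℝ) * ∑ B ∈ s, f B * g B
          ≤ (∑ B ∈ s, f B) * ∑ B ∈ s, g B := by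
            have := cheb; rw [hcards] at this; exact this
        _ ≤ ((N.choose n : ℝ) * c ^ n) * ∑ B ∈ s, g B :=
            mul_le_mul_of_nonneg_right ihn hSg0
        _ = ((N.choose n : ℝ) * c ^ n) * ((N.choose n : ℝ) * ((N : ℝ) - n) * c) := by rw [hSg]
        _ = (N.choose n : ℝ) * (c ^ n * ((N.choose n : ℝ) * ((N : ℝ) - n) * c)) := by ring
    have hchoose : (N.choose n : ℝ) * ((N : ℝ) - n) = (N.choose (n+1) : ℝ) * ((n+1 : ℕ) : ℝ) := by
      have h := Nat.choose_succ_right_eq N n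
      have : ((N - n : ℕ) : ℝ) = (N : ℝ) - n := Nat.cast_sub hnN
      have h' : (N.choose (n+1) : ℝ) * ((n+1 : ℕ) : ℝ) = (N.choose n : ℝ) * ((N - n : ℕ) : ℝ) := by
        exact_mod_cast congrArg (Nat.cast : ℕ → ℝ) h
      rw [h', this]
    have final : ((n + 1 : ℕ) : ℝ) * ∑ B ∈ powersetCard (n+1) (univ : Finset (Fin N)), f B
        ≤ ((n + 1 : ℕ) : ℝ) * ((N.choose (n+1) : ℝ) * c ^ (n+1)) := by
      have := (mul_le_mul_iff_right₀ hCpos).mp step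
      rw [hchoose] at *
      calc ((n + 1 : ℕ) : ℝ) * ∑ B ∈ powersetCard (n+1) (univ : Finset (Fin N)), f B
          ≤ c ^ n * ((N.choose (n+1) : ℝ) * ((n+1 : ℕ) : ℝ) * c) := by
            nlinarith [this]
        _ = ((n + 1 : ℕ) : ℝ) * ((N.choose (n+1) : ℝ) * c ^ (n+1)) := by ring
    have hn1pos : (0:ℝ) < ((n + 1 : ℕ) : ℝ) := by positivity
    exact (mul_le_mul_iff_right₀ hn1pos).mp final

private lemma gvEndgame (α β p : ℝ) (hα0 : 0 < α) (hα1 : α < 1) (hβ0 : 0 < β) (hβ1 : β < 1)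
    (hp0 : 0 < p) (hpαβ : p ≤ α * β) :
    (α / (-Real.log (α * β)) * (-Real.log β + β - 1)) * (-Real.log p)
      ≤ α * Real.log α + α * (-Real.log p) - α + p := by
  have hαβ0 : 0 < α * β := mul_pos hα0 hβ0
  have hαβ1 : α * β < 1 := by nlinarith
  set u : ℝ := -Real.log (α * β) with hu_def
  set L : ℝ := -Real.log p with hL_def
  set A : ℝ := -Real.log β + β - 1 with hA_def
  have hu0 : 0 < u := by
    have := Real.log_neg hαβ0 hαβ1
    rw [hu_def]; linarith
  have hLu : u ≤ L := by
    have := Real.log_le_log hp0 hpαβ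
    rw [hu_def, hL_def]; linarith
  have hlogmul : Real.log (α * β) = Real.log α + Real.log β :=
    Real.log_mul hα0.ne' hβ0.ne'
  have hlogα : Real.log α < 0 := Real.log_neg hα0 hα1
  have hlogβ : Real.log β < 0 := Real.log_neg hβ0 hβ1
  -- p ≥ αβ (1 - (L - u))
  have hp_lb : α * β - α * β * (L - u) ≤ p := by
    have h1 : p = Real.exp (-L) := by rw [hL_def, neg_neg, Real.exp_log hp0]
    have h2 : Real.exp (-u) = α * β := by rw [hu_def, neg_neg, Real.exp_log hαβ0]
    have h3 : (u - L) + 1 ≤ Real.exp (u - L) := Real.add_one_le_exp _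
    have h4 : Real.exp (-L) = Real.exp (-u) * Real.exp (u - L) := by
      rw [← Real.exp_add]; ring_nf
    rw [h1, h4, h2]
    nlinarith [Real.exp_pos (u - L)]
  -- β log β ≥ β - 1
  have hblb : β - 1 ≤ β * Real.log β := by
    have h := Real.log_le_sub_one_of_pos (show (0:ℝ) < β⁻¹ by positivity)
    rw [Real.log_inv] at h
    have h2 : β * (-Real.log β) ≤ β * (β⁻¹ - 1) := mul_le_mul_of_nonneg_left h hβ0.le
    have h3 : β * β⁻¹ = 1 := mul_inv_cancel₀ hβ0.ne'
    nlinarith [h2, h3]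
  have hA0 : 0 ≤ A := by
    rw [hA_def]
    nlinarith [Real.log_le_sub_one_of_pos hβ0]
  -- A ≤ (1 - β) u
  have hAu : A ≤ (1 - β) * u := by
    have h1 : -Real.log β ≤ u := by rw [hu_def, hlogmul]; linarith
    have h2 : (1 - β) * (-Real.log β) ≤ (1 - β) * u :=
      mul_le_mul_of_nonneg_left h1 (by linarith)
    rw [hA_def]
    nlinarith [hblb]
  set r : ℝ := α / u * A with hr_def
  have h2 : r ≤ α - α * β := by
    have : A / u ≤ 1 - β := (div_le_iff₀ hu0).mpr (by linarith [hAu])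
    have := mul_le_mul_of_nonneg_left this hα0.le
    rw [hr_def]
    calc α / u * A = α * (A / u) := by ring
      _ ≤ α * (1 - β) := this
      _ = α - α * β := by ring
  have h3 : α * Real.log α + α * u - α + α * β = r * u := by
    have : r * u = α * A := by rw [hr_def]; field_simp
    rw [this, hA_def, hu_def, hlogmul]; ring
  have h4 : r * (L - u) ≤ (α - α * β) * (L - u) :=
    mul_le_mul_of_nonneg_right h2 (by linarith)
  nlinarith [h4, h3, hp_lb]

set_option maxHeartbeats 2000000 in
/-- Gilbert–Varshamov-type bound, Massart Lemma 4.7: for `1 ≤ D < N` and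
`α, β ∈ (0,1)` with `D ≤ αβN`, there is a subset `Θ` of the Hamming sphere of radius `D`
in `{0,1}^N` whose points are pairwise more than `2(1-α)D` apart and with
`ln |Θ| ≥ ρ D ln(N/D)` where `ρ = α(-ln β + β - 1)/(-ln(αβ))`. -/
theorem gilbert_varshamov (N D : ℕ) (hN : 2 ≤ N) (hD1 : 1 ≤ D) (hDN : D < N)
    (α β : ℝ) (hα : α ∈ Set.Ioo (0 : ℝ) 1) (hβ : β ∈ Set.Ioo (0 : ℝ) 1)
    (hDαβ : (D : ℝ) ≤ α * β * N) :
    ∃ Θ : Finset (Fin N → Bool),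
      (∀ θ ∈ Θ, hammingDist (fun _ => false) θ = D) ∧
      (∀ θ ∈ Θ, ∀ θ' ∈ Θ, θ ≠ θ' →
        (2 * (1 - α) * D : ℝ) < (hammingDist θ θ' : ℝ)) ∧
      (α / (-Real.log (α * β)) * (-Real.log β + β - 1)) * D * Real.log ((N : ℝ) / D)
        ≤ Real.log Θ.card := by
  classical
  obtain ⟨hα0, hα1⟩ := hα
  obtain ⟨hβ0, hβ1⟩ := hβ
  have hD0 : (0:ℝ) < D := by exact_mod_cast hD1
  have hN0 : (0:ℝ) < N := by positivity
  have hDNr : (D:ℝ) < N := by exact_mod_cast hDN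
  -- greedy maximal packing
  let pc := powersetCard D (univ : Finset (Fin N))
  let P : Finset (Finset (Fin N)) → Prop := fun Θ =>
    Θ ⊆ pc ∧ ∀ A ∈ Θ, ∀ B ∈ Θ, A ≠ B → ((A ∩ B).card : ℝ) < α * D
  have hPempty : P ∅ := ⟨empty_subset _, by simp⟩
  obtain ⟨Θ₀, hΘ₀mem, hΘ₀max⟩ := Finset.exists_max_image
      (pc.powerset.filter P) Finset.card ⟨∅, by
        simp only [mem_filter, mem_powerset]
        exact ⟨empty_subset _, hPempty⟩⟩
  rw [mem_filter, mem_powerset] at hΘ₀mem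
  obtain ⟨hΘ₀sub, hΘ₀sub', hΘ₀pair⟩ : Θ₀ ⊆ pc ∧ Θ₀ ⊆ pc ∧
      ∀ A ∈ Θ₀, ∀ B ∈ Θ₀, A ≠ B → ((A ∩ B).card : ℝ) < α * D :=
    ⟨hΘ₀mem.1, hΘ₀mem.2.1, hΘ₀mem.2.2⟩
  have hcardD : ∀ A ∈ Θ₀, A.card = D := fun A hA => (mem_powersetCard.mp (hΘ₀sub hA)).2
  -- covering
  have hcover : ∀ B ∈ pc, ∃ θ ∈ Θ₀, α * (D:ℝ) ≤ ((B ∩ θ).card : ℝ) := by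
    intro B hB
    by_contra hcon
    push_neg at hcon
    have hBD : B.card = D := (mem_powersetCard.mp hB).2
    have hBnot : B ∉ Θ₀ := by
      intro hBin
      have := hcon B hBin
      rw [inter_self, hBD] at this
      nlinarith
    have hP' : P (insert B Θ₀) := by
      constructor
      · exact insert_subset hB hΘ₀sub
      · intro X hX Y hY hXY
        rcases mem_insert.mp hX with rfl | hX' <;> rcases mem_insert.mp hY with rfl | hY'
        · exact absurd rfl hXY
        · exact hcon Y hY'
        · rw [inter_comm]; exact hcon X hX'
        · exact hΘ₀pair X hX' Y hY' hXY
    have hmem' : insert B Θ₀ ∈ pc.powerset.filter P := by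
      rw [mem_filter, mem_powerset]; exact ⟨hP'.1, hP'⟩
    have := hΘ₀max _ hmem'
    rw [card_insert_of_notMem hBnot] at this
    omega
  -- the parameter t and c
  set t : ℝ := α * N / D with ht_def
  have ht1 : 1 < t := by
    rw [ht_def, lt_div_iff₀ hD0]
    nlinarith
  set c : ℝ := 1 + (t - 1) * D / N with hc_def
  have hceq : c = 1 + α - D / N := by
    rw [hc_def, ht_def]; field_simp; ring
  have hc0 : 0 < c := by
    rw [hceq]
    have : (D:ℝ)/N < 1 := (div_lt_one hN0).mpr hDNr
    linarith
  -- ball bound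
  let Ball : Finset (Fin N) → Finset (Finset (Fin N)) := fun θ =>
    pc.filter fun B => α * (D:ℝ) ≤ ((B ∩ θ).card : ℝ)
  have hball : ∀ θ ∈ Θ₀, ((Ball θ).card : ℝ) * t ^ (α * (D:ℝ))
      ≤ (N.choose D : ℝ) * c ^ D := by
    intro θ hθ
    have hθD : θ.card = D := hcardD θ hθ
    have h1 : ((Ball θ).card : ℝ) * t ^ (α * (D:ℝ))
        = ∑ _B ∈ Ball θ, t ^ (α * (D:ℝ)) := by
      rw [sum_const, nsmul_eq_mul]
    rw [h1]
    have h2 : ∑ _B ∈ Ball θ, t ^ (α * (D:ℝ)) ≤ ∑ B ∈ Ball θ, t ^ (B ∩ θ).card := by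
      refine sum_le_sum fun B hB => ?_
      have hge : α * (D:ℝ) ≤ ((B ∩ θ).card : ℝ) := (mem_filter.mp hB).2
      calc t ^ (α * (D:ℝ)) ≤ t ^ (((B ∩ θ).card : ℕ) : ℝ) :=
            Real.rpow_le_rpow_of_exponent_le ht1.le hge
        _ = t ^ (B ∩ θ).card := Real.rpow_natCast t _
    refine le_trans h2 ?_
    have h3 : ∑ B ∈ Ball θ, t ^ (B ∩ θ).card ≤ ∑ B ∈ pc, t ^ (B ∩ θ).card := by
      refine sum_le_sum_of_subset_of_nonneg (filter_subset _ _) fun B _ _ => ?_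
      positivity
    refine le_trans h3 ?_
    have := gvMGF θ t ht1.le D hDN.le
    rwa [hθD] at this
  -- combine into t^(αD) ≤ Θ₀.card * c^D
  have hchoosepos : (0:ℝ) < (N.choose D : ℝ) := by
    exact_mod_cast Nat.cast_pos.mpr (Nat.choose_pos hDN.le)
  have hcount : (N.choose D : ℝ) * t ^ (α * (D:ℝ)) ≤ (Θ₀.card : ℝ) * ((N.choose D : ℝ) * c ^ D) := by
    have hsub : pc ⊆ Θ₀.biUnion Ball := by
      intro B hB
      obtain ⟨θ, hθ, hge⟩ := hcover B hB
      exact mem_biUnion.mpr ⟨θ, hθ, mem_filter.mpr ⟨hB, hge⟩⟩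
    have h1 : pc.card ≤ ∑ θ ∈ Θ₀, (Ball θ).card :=
      le_trans (card_le_card hsub) card_biUnion_le
    have h1' : (N.choose D : ℝ) ≤ ∑ θ ∈ Θ₀, ((Ball θ).card : ℝ) := by
      have : pc.card = N.choose D := by
        rw [show pc = powersetCard D (univ : Finset (Fin N)) from rfl,
          card_powersetCard, card_univ, Fintype.card_fin]
      rw [← this]
      exact_mod_cast h1
    have htpow0 : (0:ℝ) < t ^ (α * (D:ℝ)) := Real.rpow_pos_of_pos (by linarith) _
    calc (N.choose D : ℝ) * t ^ (α * (D:ℝ))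
        ≤ (∑ θ ∈ Θ₀, ((Ball θ).card : ℝ)) * t ^ (α * (D:ℝ)) :=
          mul_le_mul_of_nonneg_right h1' htpow0.le
      _ = ∑ θ ∈ Θ₀, ((Ball θ).card : ℝ) * t ^ (α * (D:ℝ)) := by rw [sum_mul]
      _ ≤ ∑ θ ∈ Θ₀, (N.choose D : ℝ) * c ^ D := sum_le_sum hball
      _ = (Θ₀.card : ℝ) * ((N.choose D : ℝ) * c ^ D) := by
          rw [sum_const, nsmul_eq_mul]
  have hkey : t ^ (α * (D:ℝ)) ≤ (Θ₀.card : ℝ) * c ^ D := by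
    have := hcount
    nlinarith [this, hchoosepos, Real.rpow_pos_of_pos (show (0:ℝ) < t by linarith) (α * (D:ℝ))]
  have ht0 : (0:ℝ) < t := by linarith
  have hrpow0 : (0:ℝ) < t ^ (α * (D:ℝ)) := Real.rpow_pos_of_pos ht0 _
  have hΘposR : (0:ℝ) < (Θ₀.card : ℝ) := by
    rcases Nat.eq_zero_or_pos Θ₀.card with h | h
    · exfalso
      rw [h] at hkey
      push_cast at hkey
      nlinarith [hkey, hrpow0]
    · exact_mod_cast h
  have hlog1 : (α * (D:ℝ)) * Real.log t ≤ Real.log (Θ₀.card : ℝ) + D * Real.log c := by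
    have h := Real.log_le_log hrpow0 hkey
    rw [Real.log_rpow ht0] at h
    rw [Real.log_mul hΘposR.ne' (pow_pos hc0 D).ne', Real.log_pow] at h
    push_cast at h
    linarith
  set p : ℝ := (D:ℝ)/N with hp_def
  have hp0 : 0 < p := by positivity
  have hpαβ : p ≤ α * β := by
    rw [hp_def, div_le_iff₀ hN0]
    linarith
  have hlogc_le : Real.log c ≤ α - p := by
    have := Real.log_le_sub_one_of_pos hc0
    rw [hceq] at this ⊢
    linarith
  have hlogt : Real.log t = Real.log α - Real.log p := by
    have e : t = α / p := by
      rw [ht_def, hp_def]; field_simp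
    rw [e, Real.log_div hα0.ne' hp0.ne']
  have hend := gvEndgame α β p hα0 hα1 hβ0 hβ1 hp0 hpαβ
  have hL : Real.log ((N:ℝ) / D) = -Real.log p := by
    rw [← Real.log_inv]
    congr 1
    rw [hp_def]
    field_simp
  have hfinal : (α / (-Real.log (α * β)) * (-Real.log β + β - 1)) * D * Real.log ((N : ℝ) / D)
      ≤ Real.log (Θ₀.card : ℝ) := by
    rw [hL]
    have hend' : (D:ℝ) * ((α / (-Real.log (α * β)) * (-Real.log β + β - 1)) * (-Real.log p))
        ≤ (D:ℝ) * (α * Real.log α + α * (-Real.log p) - α + p) :=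
      mul_le_mul_of_nonneg_left hend hD0.le
    have hltD : (α * (D:ℝ)) * Real.log t = (D:ℝ) * (α * Real.log α - α * Real.log p) := by
      rw [hlogt]; ring
    have hlcD : (D:ℝ) * Real.log c ≤ (D:ℝ) * (α - p) :=
      mul_le_mul_of_nonneg_left hlogc_le hD0.le
    have hgoal_eq : (α / (-Real.log (α * β)) * (-Real.log β + β - 1)) * (D:ℝ) * (-Real.log p)
        = (D:ℝ) * ((α / (-Real.log (α * β)) * (-Real.log β + β - 1)) * (-Real.log p)) := by
      ring
    rw [hgoal_eq]
    linarith [hend', hltD, hlcD, hlog1]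
  refine ⟨Θ₀.image tv, ?_, ?_, ?_⟩
  · intro θ hθ
    obtain ⟨B, hB, rfl⟩ := mem_image.mp hθ
    rw [hamming_tv_zero, hcardD B hB]
  · intro θ hθ θ' hθ' hne
    obtain ⟨A, hA, rfl⟩ := mem_image.mp hθ
    obtain ⟨B, hB, rfl⟩ := mem_image.mp hθ'
    have hAB : A ≠ B := fun h => hne (by rw [h])
    have hpair := hΘ₀pair A hA B hB hAB
    have hham := hamming_tv A B
    rw [hcardD A hA, hcardD B hB] at hham
    have he : (hammingDist (tv A) (tv B) : ℝ) = 2*(D:ℝ) - 2*((A ∩ B).card:ℝ) := by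
      have := congrArg (Nat.cast : ℕ → ℝ) hham
      push_cast at this
      linarith
    linarith [he, hpair]
  · rw [card_image_of_injective _ tv_inj]
    exact hfinal
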